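/- In the setting of the single positive cycle of even length k in type B_n (k > 2): the roots of B_n that are moved by s but have zero orthogonal projection onto the plane V_{k/2} (the eigenplane of rotation angle 2π/k) are exactly ±(ε_j + ε_{k−j+1}) for j = 1,…,k/2; there are k of them, and each has nonzero projection onto the eigenplane V_{k/2−1} (rotation angle 4π/k). -/

import Mathlib

/-- The standard basis vector `ε_i` of `ℝⁿ`. -/
def eB (n : ℕ) (i : Fin n) : Fin n → ℝ := Pi.single i 1

/-- The roots of type `B_n`: `±ε_i ± ε_j` (`i ≠ j`) and `±ε_i`. -/
def DeltaB (n : ℕ) : Set (Fin n → ℝ) :=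
  {v | (∃ i j : Fin n, i ≠ j ∧ v = eB n i - eB n j) ∨
       (∃ i j : Fin n, i < j ∧ (v = eB n i + eB n j ∨ v = -(eB n i + eB n j))) ∨
       (∃ i : Fin n, v = eB n i ∨ v = -(eB n i))}

/-- The inverse of the positive cycle
`ε₁ → ε₂ → ε₄ → ⋯ → ε_k → ε_{k-1} → ⋯ → ε₃ → ε₁` (1-based), written 0-based:
`g` sends an index to its predecessor under the cycle, so that
`α ∘ g` is the image of `α` under the cycle. -/
def gCyc (n k : ℕ) (hkn : k ≤ n) (hke : k % 2 = 0) (j : Fin n) : Fin n :=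
  if h1 : k ≤ (j : ℕ) then j
  else if h2 : (j : ℕ) = 1 then ⟨0, j.pos⟩
  else if h3 : (j : ℕ) % 2 = 1 then ⟨(j : ℕ) - 2, by have := j.isLt; omega⟩
  else if h4 : (j : ℕ) = k - 2 then ⟨k - 1, by omega⟩
  else ⟨(j : ℕ) + 2, by have := j.isLt; omega⟩

/-- The orthogonal projection onto the eigenplane of the cycle corresponding to
the eigenvalue `z`, in complex coordinates: `ε_{2j+1} ↦ c z^j`, `ε_{2j} ↦ c z^{-j}`
(1-based indices), with `c = √(2/k)`. -/
noncomputable def projB (n k : ℕ) (hkn : k ≤ n) (z : ℂ) (α : Fin n → ℝ) : ℂ :=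
  (Real.sqrt (2 / (k : ℝ)) : ℂ) *
    ((∑ j : Fin (k / 2),
        ((α ⟨2 * (j : ℕ), by have := j.isLt; omega⟩ : ℝ) : ℂ) * z ^ (j : ℕ)) +
      ∑ j : Fin (k / 2),
        ((α ⟨2 * (j : ℕ) + 1, by have := j.isLt; omega⟩ : ℝ) : ℂ)
          * z ^ (-(((j : ℕ) : ℤ) + 1)))

section Aux
open Finset

noncomputable def projB' (k : ℕ) (z : ℂ) (β : ℕ → ℝ) : ℂ :=
  (Real.sqrt (2 / (k : ℝ)) : ℂ) *
    ((∑ j ∈ Finset.range (k / 2), (β (2 * j) : ℂ) * z ^ j) +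
      ∑ j ∈ Finset.range (k / 2), (β (2 * j + 1) : ℂ) * z ^ (-((j : ℤ) + 1)))

lemma projB_eq_projB' (n k : ℕ) (hkn : k ≤ n) (z : ℂ) (α : Fin n → ℝ) :
    projB n k hkn z α =
      projB' k z (fun t => if h : t < n then α ⟨t, h⟩ else 0) := by
  unfold projB projB'
  congr 1
  congr 1
  · rw [← Fin.sum_univ_eq_sum_range
      (fun j => ((if h : 2 * j < n then α ⟨2 * j, h⟩ else 0 : ℝ) : ℂ) * z ^ j)]
    refine Finset.sum_congr rfl fun j _ => ?_
    have h : 2 * (j : ℕ) < n := by have := j.isLt; omega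
    rw [dif_pos h]
  · rw [← Fin.sum_univ_eq_sum_range
      (fun j => ((if h : 2 * j + 1 < n then α ⟨2 * j + 1, h⟩ else 0 : ℝ) : ℂ) * z ^ (-((j : ℤ) + 1)))]
    refine Finset.sum_congr rfl fun j _ => ?_
    have h : 2 * (j : ℕ) + 1 < n := by have := j.isLt; omega
    rw [dif_pos h]

lemma dite_eB (n : ℕ) (i : Fin n) :
    (fun t => if h : t < n then eB n i ⟨t, h⟩ else 0) =
      fun t => if t = (i : ℕ) then (1 : ℝ) else 0 := by
  funext t
  by_cases h : t < n
  · rw [dif_pos h]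
    simp [eB, Pi.single_apply, Fin.ext_iff]
  · rw [dif_neg h, if_neg (by have := i.isLt; omega)]

def EE (k c : ℕ) : ℕ := if c % 2 = 0 then c / 2 else k - c / 2 - 1

lemma EE_lt {k c : ℕ} (h : c < k) : EE k c < k := by unfold EE; split_ifs <;> omega

lemma EE_inj {k c d : ℕ} (hc : c < k) (hd : d < k) (h : EE k c = EE k d) : c = d := by
  unfold EE at h; split_ifs at h <;> omega

lemma pow_mod_eq {z : ℂ} {k : ℕ} (hz : z ^ k = 1) (t : ℕ) : z ^ t = z ^ (t % k) := by
  conv_lhs => rw [← Nat.div_add_mod t k]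
  rw [pow_add, pow_mul, hz, one_pow, one_mul]

lemma zpow_neg_eq {z : ℂ} {k a : ℕ} (hz : z ^ k = 1) (ha : a + 1 ≤ k) :
    z ^ (-((a : ℤ) + 1)) = z ^ (k - a - 1) := by
  have h1 : z ^ (-((a : ℤ) + 1)) = (z ^ (a + 1))⁻¹ := by
    rw [show -((a : ℤ) + 1) = -((a + 1 : ℕ) : ℤ) by push_cast; ring, zpow_neg, zpow_natCast]
  rw [h1]
  refine inv_eq_of_mul_eq_one_left ?_
  rw [← pow_add, show k - a - 1 + (a + 1) = k by omega, hz]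

lemma projB'_delta (k : ℕ) (hke : k % 2 = 0) (h2 : 2 < k) {z : ℂ} (hz : z ^ k = 1) (c : ℕ) :
    projB' k z (fun t => if t = c then (1 : ℝ) else 0) =
      if c < k then (Real.sqrt (2 / (k : ℝ)) : ℂ) * z ^ (EE k c) else 0 := by
  unfold projB'
  have hsum1 : (∑ j ∈ range (k / 2), ((if 2 * j = c then (1 : ℝ) else 0 : ℝ) : ℂ) * z ^ j)
      = if c % 2 = 0 ∧ c < k then z ^ (c / 2) else 0 := by
    split_ifs with h
    · rw [Finset.sum_eq_single (c / 2)]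
      · rw [if_pos (by omega)]; norm_num
      · intro b _ hbne
        rw [if_neg (by omega)]; norm_num
      · intro hmem
        exact absurd (Finset.mem_range.mpr (by omega)) hmem
    · apply Finset.sum_eq_zero
      intro b hb
      rw [if_neg (by simp only [Finset.mem_range] at hb; omega)]; norm_num
  have hsum2 : (∑ j ∈ range (k / 2), ((if 2 * j + 1 = c then (1 : ℝ) else 0 : ℝ) : ℂ)
        * z ^ (-((j : ℤ) + 1)))
      = if c % 2 = 1 ∧ c < k then z ^ (k - c / 2 - 1) else 0 := by
    split_ifs with h
    · rw [Finset.sum_eq_single (c / 2)]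
      · rw [if_pos (by omega), zpow_neg_eq hz (by omega)]; norm_num
      · intro b _ hbne
        rw [if_neg (by omega)]; norm_num
      · intro hmem
        exact absurd (Finset.mem_range.mpr (by omega)) hmem
    · apply Finset.sum_eq_zero
      intro b hb
      rw [if_neg (by simp only [Finset.mem_range] at hb; omega)]; norm_num
  rw [hsum1, hsum2]
  unfold EE
  by_cases hck : c < k
  · by_cases hcp : c % 2 = 0
    · rw [if_pos ⟨hcp, hck⟩, if_neg (by omega), if_pos hck, if_pos hcp, add_zero]
    · rw [if_neg (by omega), if_pos ⟨by omega, hck⟩, if_pos hck, if_neg hcp, zero_add]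
  · rw [if_neg (by omega), if_neg (by omega), if_neg hck, add_zero, mul_zero]

lemma projB_add (n k : ℕ) (hkn : k ≤ n) (z : ℂ) (α β : Fin n → ℝ) :
    projB n k hkn z (α + β) = projB n k hkn z α + projB n k hkn z β := by
  unfold projB
  simp only [Pi.add_apply, Complex.ofReal_add, add_mul, Finset.sum_add_distrib]
  ring

lemma projB_neg (n k : ℕ) (hkn : k ≤ n) (z : ℂ) (α : Fin n → ℝ) :
    projB n k hkn z (-α) = -projB n k hkn z α := by
  unfold projB
  simp only [Pi.neg_apply, Complex.ofReal_neg, neg_mul, Finset.sum_neg_distrib]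
  ring

lemma projB_sub (n k : ℕ) (hkn : k ≤ n) (z : ℂ) (α β : Fin n → ℝ) :
    projB n k hkn z (α - β) = projB n k hkn z α - projB n k hkn z β := by
  rw [sub_eq_add_neg, projB_add, projB_neg, sub_eq_add_neg]

lemma gCyc_lt (n k : ℕ) (hkn : k ≤ n) (hke : k % 2 = 0) (x : Fin n) (hx : (x : ℕ) < k) :
    ((gCyc n k hkn hke x : Fin n) : ℕ) < k := by
  unfold gCyc
  split_ifs <;> (try simp) <;> omega

lemma gCyc_ne (n k : ℕ) (hkn : k ≤ n) (hke : k % 2 = 0) (h2 : 2 < k) (x : Fin n)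
    (hx : (x : ℕ) < k / 2) :
    ((gCyc n k hkn hke x : Fin n) : ℕ) ≠ (x : ℕ) ∧
      ((gCyc n k hkn hke x : Fin n) : ℕ) ≠ k - 1 - (x : ℕ) := by
  unfold gCyc
  split_ifs <;> (try simp) <;> omega

lemma fixed_of_support (n k : ℕ) (hkn : k ≤ n) (hke : k % 2 = 0) (α : Fin n → ℝ)
    (h : ∀ x : Fin n, (x : ℕ) < k → α x = 0) :
    (fun j => α (gCyc n k hkn hke j)) = α := by
  funext x
  by_cases hx : k ≤ (x : ℕ)
  · simp only [gCyc, dif_pos hx]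
  · rw [h _ (gCyc_lt n k hkn hke x (by omega)), h x (by omega)]

lemma projB_eB (n k : ℕ) (hkn : k ≤ n) (hke : k % 2 = 0) (h2 : 2 < k) {z : ℂ}
    (hz : z ^ k = 1) (i : Fin n) :
    projB n k hkn z (eB n i) =
      if (i : ℕ) < k then (Real.sqrt (2 / (k : ℝ)) : ℂ) * z ^ (EE k (i : ℕ)) else 0 := by
  rw [projB_eq_projB', dite_eB, projB'_delta k hke h2 hz]

lemma part1 (k n : ℕ) (hke : k % 2 = 0) (h2 : 2 < k) (hkn : k ≤ n) :
    ({α | α ∈ DeltaB n ∧ (fun j => α (gCyc n k hkn hke j)) ≠ α ∧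
        projB n k hkn (Complex.exp (2 * Real.pi * Complex.I / (k : ℂ))) α = 0}
      = {v | ∃ a : ℕ, ∃ ha : a < k / 2,
          v = eB n ⟨a, by omega⟩ + eB n ⟨k - 1 - a, by omega⟩ ∨
          v = -(eB n ⟨a, by omega⟩ + eB n ⟨k - 1 - a, by omega⟩)}) := by
  have hk0 : k ≠ 0 := by omega
  set z := Complex.exp (2 * Real.pi * Complex.I / (k : ℂ)) with hzdef
  have hprim : IsPrimitiveRoot z k := Complex.isPrimitiveRoot_exp k hk0
  have hzk : z ^ k = 1 := hprim.pow_eq_one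
  have hz0 : z ≠ 0 := Complex.exp_ne_zero _
  have hC : (Real.sqrt (2 / (k : ℝ)) : ℂ) ≠ 0 := by
    rw [Complex.ofReal_ne_zero]
    refine ne_of_gt (Real.sqrt_pos.mpr (div_pos two_pos ?_))
    exact_mod_cast Nat.pos_of_ne_zero hk0
  have hzm : z ^ (k / 2) = -1 := by
    have hsq : (z ^ (k / 2)) ^ 2 = 1 := by
      rw [← pow_mul, show k / 2 * 2 = k by omega]; exact hzk
    have hne : z ^ (k / 2) ≠ 1 := hprim.pow_ne_one_of_pos_of_lt (by omega) (by omega)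
    have hfac : (z ^ (k / 2) - 1) * (z ^ (k / 2) + 1) = 0 := by linear_combination hsq
    rcases mul_eq_zero.mp hfac with h | h
    · exact absurd (by linear_combination h) hne
    · linear_combination h
  have hP : ∀ i : Fin n, projB n k hkn z (eB n i)
      = if (i : ℕ) < k then (Real.sqrt (2 / (k : ℝ)) : ℂ) * z ^ (EE k (i : ℕ)) else 0 :=
    fun i => projB_eB n k hkn hke h2 hzk i
  ext α
  simp only [Set.mem_setOf_eq]
  constructor
  · rintro ⟨hΔ, hmv, hproj⟩
    have main2 : ∀ i j : Fin n, (i : ℕ) ≠ (j : ℕ) →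
        projB n k hkn z (eB n i + eB n j) = 0 →
        (∀ x : Fin n, (x : ℕ) < k → (eB n i + eB n j) x = 0) ∨
          ((i : ℕ) < k ∧ (j : ℕ) < k ∧ (i : ℕ) + (j : ℕ) = k - 1) := by
      intro i j hij hpr
      rw [projB_add, hP i, hP j] at hpr
      by_cases hi : (i : ℕ) < k <;> by_cases hj : (j : ℕ) < k
      · right
        refine ⟨hi, hj, ?_⟩
        rw [if_pos hi, if_pos hj] at hpr
        have h0 : z ^ (EE k (i : ℕ)) = -z ^ (EE k (j : ℕ)) := by
          apply mul_left_cancel₀ hC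
          rw [mul_neg]
          exact eq_neg_of_add_eq_zero_left hpr
        have h1 : z ^ (EE k (i : ℕ)) = z ^ ((EE k (j : ℕ) + k / 2) % k) := by
          rw [← pow_mod_eq hzk, pow_add, hzm, h0]; ring
        have h3 : EE k (i : ℕ) = (EE k (j : ℕ) + k / 2) % k :=
          hprim.pow_inj (EE_lt hi) (Nat.mod_lt _ (by omega)) h1
        have hlt_i := EE_lt hi
        have hlt_j := EE_lt hj
        rcases Nat.lt_or_ge (EE k (j : ℕ) + k / 2) k with hc | hc
        · rw [Nat.mod_eq_of_lt hc] at h3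
          unfold EE at h3; split_ifs at h3 <;> omega
        · rw [Nat.mod_eq_sub_mod hc, Nat.mod_eq_of_lt (by omega)] at h3
          unfold EE at h3 hc; split_ifs at h3 hc <;> omega
      · exfalso
        rw [if_pos hi, if_neg hj, add_zero] at hpr
        exact mul_ne_zero hC (pow_ne_zero _ hz0) hpr
      · exfalso
        rw [if_neg hi, if_pos hj, zero_add] at hpr
        exact mul_ne_zero hC (pow_ne_zero _ hz0) hpr
      · left
        intro x hx
        simp only [Pi.add_apply, eB, Pi.single_apply]
        rw [if_neg (fun h => by rw [h] at hx; omega),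
          if_neg (fun h => by rw [h] at hx; omega), add_zero]
    rcases hΔ with ⟨i, j, hij, rfl⟩ | ⟨i, j, hij, hv | hv⟩ | ⟨i, hv | hv⟩
    · -- α = eB i - eB j
      rw [projB_sub, hP i, hP j] at hproj
      by_cases hi : (i : ℕ) < k <;> by_cases hj : (j : ℕ) < k
      · rw [if_pos hi, if_pos hj] at hproj
        have h0 := mul_left_cancel₀ hC (sub_eq_zero.mp hproj)
        exact absurd (Fin.ext (EE_inj hi hj (hprim.pow_inj (EE_lt hi) (EE_lt hj) h0))) hij
      · exfalso
        rw [if_pos hi, if_neg hj, sub_zero] at hproj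
        exact mul_ne_zero hC (pow_ne_zero _ hz0) hproj
      · exfalso
        rw [if_neg hi, if_pos hj, zero_sub, neg_eq_zero] at hproj
        exact mul_ne_zero hC (pow_ne_zero _ hz0) hproj
      · exfalso
        apply hmv
        apply fixed_of_support
        intro x hx
        simp only [Pi.sub_apply, eB, Pi.single_apply]
        rw [if_neg (fun h => by rw [h] at hx; omega),
          if_neg (fun h => by rw [h] at hx; omega), sub_zero]
    · -- α = eB i + eB j
      subst hv
      have hijne : (i : ℕ) ≠ (j : ℕ) := fun h => absurd (Fin.ext h) (ne_of_lt hij)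
      rcases main2 i j hijne hproj with hsupp | ⟨hi, hj, hsum⟩
      · exact absurd (fixed_of_support n k hkn hke _ hsupp) hmv
      · have hilt : (i : ℕ) < k / 2 := by
          have := Fin.lt_def.mp hij; omega
        refine ⟨(i : ℕ), hilt, Or.inl ?_⟩
        have hjj : j = ⟨k - 1 - (i : ℕ), by omega⟩ := Fin.ext (by simp; omega)
        have hii : i = ⟨(i : ℕ), by omega⟩ := Fin.ext rfl
        rw [hjj]
    · -- α = -(eB i + eB j)
      subst hv
      have hijne : (i : ℕ) ≠ (j : ℕ) := fun h => absurd (Fin.ext h) (ne_of_lt hij)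
      rw [projB_neg, neg_eq_zero] at hproj
      rcases main2 i j hijne hproj with hsupp | ⟨hi, hj, hsum⟩
      · exfalso
        apply hmv
        apply fixed_of_support
        intro x hx
        simp only [Pi.neg_apply, hsupp x hx, neg_zero]
      · have hilt : (i : ℕ) < k / 2 := by
          have := Fin.lt_def.mp hij; omega
        refine ⟨(i : ℕ), hilt, Or.inr ?_⟩
        have hjj : j = ⟨k - 1 - (i : ℕ), by omega⟩ := Fin.ext (by simp; omega)
        rw [hjj]
    · -- α = eB i
      subst hv
      exfalso
      rw [hP i] at hproj
      by_cases hi : (i : ℕ) < k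
      · rw [if_pos hi] at hproj
        exact mul_ne_zero hC (pow_ne_zero _ hz0) hproj
      · apply hmv
        apply fixed_of_support
        intro x hx
        simp only [eB, Pi.single_apply]
        rw [if_neg (fun h => by rw [h] at hx; omega)]
    · -- α = -eB i
      subst hv
      exfalso
      rw [projB_neg, neg_eq_zero, hP i] at hproj
      by_cases hi : (i : ℕ) < k
      · rw [if_pos hi] at hproj
        exact mul_ne_zero hC (pow_ne_zero _ hz0) hproj
      · apply hmv
        apply fixed_of_support
        intro x hx
        simp only [Pi.neg_apply, eB, Pi.single_apply, neg_eq_zero]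
        rw [if_neg (fun h => by rw [h] at hx; omega)]
  · rintro ⟨a, ha, hv | hv⟩ <;> subst hv <;>
      refine ⟨?_, ?_, ?_⟩
    · exact Or.inr (Or.inl ⟨⟨a, by omega⟩, ⟨k - 1 - a, by omega⟩,
        Fin.mk_lt_mk.mpr (by omega), Or.inl rfl⟩)
    · intro heq
      have pa : a < n := by omega
      have hg := gCyc_ne n k hkn hke h2 ⟨a, pa⟩
        (show ((⟨a, pa⟩ : Fin n) : ℕ) < k / 2 from ha)
      have hcf := congrFun heq ⟨a, pa⟩
      simp only [Pi.add_apply, eB, Pi.single_apply, Fin.ext_iff, Fin.val_mk] at hcf hg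
      split_ifs at hcf <;> first | omega | norm_num at hcf
    · have pa : a < n := by omega
      have pb : k - 1 - a < n := by omega
      show projB n k hkn z (eB n ⟨a, pa⟩ + eB n ⟨k - 1 - a, pb⟩) = 0
      rw [projB_add, hP ⟨a, pa⟩, hP ⟨k - 1 - a, pb⟩]
      have hva : ((⟨a, pa⟩ : Fin n) : ℕ) = a := rfl
      have hvb : ((⟨k - 1 - a, pb⟩ : Fin n) : ℕ) = k - 1 - a := rfl
      rw [hva, hvb, if_pos (by omega : a < k), if_pos (by omega : k - 1 - a < k)]
      have hrel : EE k (k - 1 - a) = EE k a + k / 2 ∨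
          EE k a = EE k (k - 1 - a) + k / 2 := by
        unfold EE; split_ifs <;> omega
      rcases hrel with h | h <;> rw [h, pow_add, hzm] <;> ring
    · exact Or.inr (Or.inl ⟨⟨a, by omega⟩, ⟨k - 1 - a, by omega⟩,
        Fin.mk_lt_mk.mpr (by omega), Or.inr rfl⟩)
    · intro heq
      have pa : a < n := by omega
      have hg := gCyc_ne n k hkn hke h2 ⟨a, pa⟩
        (show ((⟨a, pa⟩ : Fin n) : ℕ) < k / 2 from ha)
      have hcf := congrFun heq ⟨a, pa⟩
      simp only [Pi.neg_apply, Pi.add_apply, eB, Pi.single_apply, Fin.ext_iff,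
        Fin.val_mk] at hcf hg
      split_ifs at hcf <;> first | omega | norm_num at hcf
    · have pa : a < n := by omega
      have pb : k - 1 - a < n := by omega
      show projB n k hkn z (-(eB n ⟨a, pa⟩ + eB n ⟨k - 1 - a, pb⟩)) = 0
      rw [projB_neg, neg_eq_zero, projB_add, hP ⟨a, pa⟩, hP ⟨k - 1 - a, pb⟩]
      have hva : ((⟨a, pa⟩ : Fin n) : ℕ) = a := rfl
      have hvb : ((⟨k - 1 - a, pb⟩ : Fin n) : ℕ) = k - 1 - a := rfl
      rw [hva, hvb, if_pos (by omega : a < k), if_pos (by omega : k - 1 - a < k)]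
      have hrel : EE k (k - 1 - a) = EE k a + k / 2 ∨
          EE k a = EE k (k - 1 - a) + k / 2 := by
        unfold EE; split_ifs <;> omega
      rcases hrel with h | h <;> rw [h, pow_add, hzm] <;> ring

lemma part2 (k n : ℕ) (hke : k % 2 = 0) (h2 : 2 < k) (hkn : k ≤ n) :
    ({v : Fin n → ℝ | ∃ a : ℕ, ∃ ha : a < k / 2,
        v = eB n ⟨a, by omega⟩ + eB n ⟨k - 1 - a, by omega⟩ ∨
        v = -(eB n ⟨a, by omega⟩ + eB n ⟨k - 1 - a, by omega⟩)}.ncard = k) := by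
  classical
  set G : Fin (k / 2) → (Fin n → ℝ) := fun a x =>
    (if (x : ℕ) = (a : ℕ) then (1 : ℝ) else 0) +
      (if (x : ℕ) = k - 1 - (a : ℕ) then (1 : ℝ) else 0) with hG
  have hGeB : ∀ (a : ℕ) (ha : a < k / 2) (pa : a < n) (pb : k - 1 - a < n),
      eB n ⟨a, pa⟩ + eB n ⟨k - 1 - a, pb⟩ = G ⟨a, ha⟩ := by
    intro a ha pa pb
    funext x
    simp [hG, eB, Pi.single_apply, Fin.ext_iff]
  have hGval : ∀ (a : Fin (k / 2)) (x : ℕ) (hx : x < n),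
      G a ⟨x, hx⟩ = (if x = (a : ℕ) then (1 : ℝ) else 0) +
        (if x = k - 1 - (a : ℕ) then (1 : ℝ) else 0) := fun a x hx => rfl
  have hGinj : Function.Injective G := by
    intro a b hab
    have ha := a.isLt
    have hb := b.isLt
    have h := congrFun hab ⟨(a : ℕ), by omega⟩
    rw [hGval, hGval] at h
    by_contra hne
    have hvne : (a : ℕ) ≠ (b : ℕ) := fun hh => hne (Fin.ext hh)
    split_ifs at h <;> first | omega | norm_num at h
  have hGNinj : Function.Injective (fun a => -G a) := fun a b hab =>
    hGinj (neg_injective hab)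
  have hdisj : Disjoint (Set.range G) (Set.range fun a => -G a) := by
    rw [Set.disjoint_left]
    rintro v ⟨a, rfl⟩ ⟨b, hb⟩
    have ha := a.isLt
    have hb' := b.isLt
    have h := congrFun hb ⟨(a : ℕ), by omega⟩
    simp only [Pi.neg_apply] at h
    rw [hGval, hGval] at h
    split_ifs at h <;> first | omega | norm_num at h
  have hset : {v : Fin n → ℝ | ∃ a : ℕ, ∃ ha : a < k / 2,
      v = eB n ⟨a, by omega⟩ + eB n ⟨k - 1 - a, by omega⟩ ∨
      v = -(eB n ⟨a, by omega⟩ + eB n ⟨k - 1 - a, by omega⟩)}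
      = Set.range G ∪ Set.range (fun a => -G a) := by
    ext v
    simp only [Set.mem_setOf_eq, Set.mem_union, Set.mem_range]
    constructor
    · rintro ⟨a, ha, rfl | rfl⟩
      · exact Or.inl ⟨⟨a, ha⟩, (hGeB a ha (by omega) (by omega)).symm⟩
      · exact Or.inr ⟨⟨a, ha⟩, by rw [← hGeB a ha (by omega) (by omega)]⟩
    · rintro (⟨a, rfl⟩ | ⟨a, rfl⟩)
      · exact ⟨(a : ℕ), a.isLt, Or.inl (by
          rw [hGeB (a : ℕ) a.isLt (by have := a.isLt; omega) (by have := a.isLt; omega)])⟩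
      · exact ⟨(a : ℕ), a.isLt, Or.inr (by
          rw [hGeB (a : ℕ) a.isLt (by have := a.isLt; omega) (by have := a.isLt; omega)])⟩
  have hc1 : (Set.range G).ncard = k / 2 := by
    rw [← Set.image_univ, Set.ncard_image_of_injective _ hGinj, Set.ncard_univ,
      Nat.card_eq_fintype_card, Fintype.card_fin]
  have hc2 : (Set.range fun a => -G a).ncard = k / 2 := by
    rw [← Set.image_univ, Set.ncard_image_of_injective _ hGNinj, Set.ncard_univ,
      Nat.card_eq_fintype_card, Fintype.card_fin]
  rw [hset, Set.ncard_union_eq hdisj (Set.finite_range G) (Set.finite_range _), hc1, hc2]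
  omega

lemma part3 (k n : ℕ) (hke : k % 2 = 0) (h2 : 2 < k) (hkn : k ≤ n) :
    ∀ v : Fin n → ℝ,
      (∃ a : ℕ, ∃ ha : a < k / 2,
        v = eB n ⟨a, by omega⟩ + eB n ⟨k - 1 - a, by omega⟩ ∨
        v = -(eB n ⟨a, by omega⟩ + eB n ⟨k - 1 - a, by omega⟩)) →
      projB n k hkn (Complex.exp (2 * Real.pi * Complex.I * 2 / (k : ℂ))) v ≠ 0 := by
  set w := Complex.exp (2 * Real.pi * Complex.I * 2 / (k : ℂ)) with hwdef
  have hk20 : (k / 2 : ℕ) ≠ 0 := by omega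
  have hkc : (k : ℂ) = 2 * ((k / 2 : ℕ) : ℂ) := by
    have h : k = 2 * (k / 2) := by omega
    calc (k : ℂ) = ((2 * (k / 2) : ℕ) : ℂ) := by exact_mod_cast congrArg (Nat.cast : ℕ → ℂ) h
    _ = 2 * ((k / 2 : ℕ) : ℂ) := by push_cast; ring
  have hweq : w = Complex.exp (2 * Real.pi * Complex.I / ((k / 2 : ℕ) : ℂ)) := by
    rw [hwdef]
    congr 1
    have hne : ((k / 2 : ℕ) : ℂ) ≠ 0 := Nat.cast_ne_zero.mpr hk20
    rw [hkc]
    field_simp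
  have hprim : IsPrimitiveRoot w (k / 2) := hweq ▸ Complex.isPrimitiveRoot_exp _ hk20
  have hwm : w ^ (k / 2) = 1 := hprim.pow_eq_one
  have hwk : w ^ k = 1 := by rw [show k = k / 2 * 2 by omega, pow_mul, hwm, one_pow]
  have hw0 : w ≠ 0 := Complex.exp_ne_zero _
  have hC : (Real.sqrt (2 / (k : ℝ)) : ℂ) ≠ 0 := by
    rw [Complex.ofReal_ne_zero]
    refine ne_of_gt (Real.sqrt_pos.mpr (div_pos two_pos ?_))
    exact_mod_cast (by omega : 0 < k)
  have hP : ∀ i : Fin n, projB n k hkn w (eB n i)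
      = if (i : ℕ) < k then (Real.sqrt (2 / (k : ℝ)) : ℂ) * w ^ (EE k (i : ℕ)) else 0 :=
    fun i => projB_eB n k hkn hke h2 hwk i
  rintro v ⟨a, ha, rfl | rfl⟩
  · have pa : a < n := by omega
    have pb : k - 1 - a < n := by omega
    show projB n k hkn w (eB n ⟨a, pa⟩ + eB n ⟨k - 1 - a, pb⟩) ≠ 0
    rw [projB_add, hP ⟨a, pa⟩, hP ⟨k - 1 - a, pb⟩]
    have hva : ((⟨a, pa⟩ : Fin n) : ℕ) = a := rfl
    have hvb : ((⟨k - 1 - a, pb⟩ : Fin n) : ℕ) = k - 1 - a := rfl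
    rw [hva, hvb, if_pos (by omega : a < k), if_pos (by omega : k - 1 - a < k)]
    have hrel : EE k (k - 1 - a) = EE k a + k / 2 ∨
        EE k a = EE k (k - 1 - a) + k / 2 := by
      unfold EE; split_ifs <;> omega
    rcases hrel with h | h <;> rw [h, pow_add, hwm, mul_one, ← two_mul] <;>
      exact mul_ne_zero two_ne_zero (mul_ne_zero hC (pow_ne_zero _ hw0))
  · have pa : a < n := by omega
    have pb : k - 1 - a < n := by omega
    show projB n k hkn w (-(eB n ⟨a, pa⟩ + eB n ⟨k - 1 - a, pb⟩)) ≠ 0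
    rw [projB_neg, neg_ne_zero, projB_add, hP ⟨a, pa⟩, hP ⟨k - 1 - a, pb⟩]
    have hva : ((⟨a, pa⟩ : Fin n) : ℕ) = a := rfl
    have hvb : ((⟨k - 1 - a, pb⟩ : Fin n) : ℕ) = k - 1 - a := rfl
    rw [hva, hvb, if_pos (by omega : a < k), if_pos (by omega : k - 1 - a < k)]
    have hrel : EE k (k - 1 - a) = EE k a + k / 2 ∨
        EE k a = EE k (k - 1 - a) + k / 2 := by
      unfold EE; split_ifs <;> omega
    rcases hrel with h | h <;> rw [h, pow_add, hwm, mul_one, ← two_mul] <;>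
      exact mul_ne_zero two_ne_zero (mul_ne_zero hC (pow_ne_zero _ hw0))

end Aux

theorem stmt10 (n k : ℕ) (hke : k % 2 = 0) (h2 : 2 < k) (hkn : k ≤ n) :
    ({α | α ∈ DeltaB n ∧ (fun j => α (gCyc n k hkn hke j)) ≠ α ∧
        projB n k hkn (Complex.exp (2 * Real.pi * Complex.I / (k : ℂ))) α = 0}
      = {v | ∃ a : ℕ, ∃ ha : a < k / 2,
          v = eB n ⟨a, by omega⟩ + eB n ⟨k - 1 - a, by omega⟩ ∨
          v = -(eB n ⟨a, by omega⟩ + eB n ⟨k - 1 - a, by omega⟩)}) ∧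
    ({v : Fin n → ℝ | ∃ a : ℕ, ∃ ha : a < k / 2,
        v = eB n ⟨a, by omega⟩ + eB n ⟨k - 1 - a, by omega⟩ ∨
        v = -(eB n ⟨a, by omega⟩ + eB n ⟨k - 1 - a, by omega⟩)}.ncard = k) ∧
    (∀ v : Fin n → ℝ,
      (∃ a : ℕ, ∃ ha : a < k / 2,
        v = eB n ⟨a, by omega⟩ + eB n ⟨k - 1 - a, by omega⟩ ∨
        v = -(eB n ⟨a, by omega⟩ + eB n ⟨k - 1 - a, by omega⟩)) →
      projB n k hkn (Complex.exp (2 * Real.pi * Complex.I * 2 / (k : ℂ))) v ≠ 0) :=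
  ⟨part1 k n hke h2 hkn, part2 k n hke h2 hkn, part3 k n hke h2 hkn⟩
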